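/- Let R be a right-flat right-linear TRS and define, for each term t, ‖t‖ as the number of positions p of t such that t|_p is not reachable from a constant. If s →_R t then ‖s‖ ≥ ‖t‖. -/

import Mathlib

/-- First-order terms over function symbols `F` and variables `V`. -/
inductive Tm (F V : Type) : Type
  | var : V → Tm F V
  | app : F → List (Tm F V) → Tm F V

namespace Tm

variable {F V : Type}

/-- Height of a term: 0 for variables and constants. -/
def height : Tm F V → ℕ
  | var _ => 0
  | app _ ts => ts.attach.foldr (fun t m => max (height t.1 + 1) m) 0
decreasing_by all_goals (simp_wf; have := List.sizeOf_lt_of_mem t.2; omega)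

/-- Size (number of positions) of a term. -/
def size : Tm F V → ℕ
  | var _ => 1
  | app _ ts => 1 + (ts.attach.map (fun t => size t.1)).sum
decreasing_by all_goals (simp_wf; have := List.sizeOf_lt_of_mem t.2; omega)

/-- Apply a substitution. -/
def subst (σ : V → Tm F V) : Tm F V → Tm F V
  | var x => σ x
  | app f ts => app f (ts.attach.map (fun t => subst σ t.1))
decreasing_by all_goals (simp_wf; have := List.sizeOf_lt_of_mem t.2; omega)

/-- List of variable occurrences. -/
def varList : Tm F V → List V
  | var x => [x]
  | app _ ts => (ts.attach.map (fun t => varList t.1)).flatten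
decreasing_by all_goals (simp_wf; have := List.sizeOf_lt_of_mem t.2; omega)

/-- List of function-symbol occurrences. -/
def symList : Tm F V → List F
  | var _ => []
  | app f ts => f :: (ts.attach.map (fun t => symList t.1)).flatten
decreasing_by all_goals (simp_wf; have := List.sizeOf_lt_of_mem t.2; omega)

/-- The subterm at a position (positions are lists of argument indices). -/
def subAt : Tm F V → List ℕ → Option (Tm F V)
  | t, [] => some t
  | var _, _ :: _ => none
  | app _ ts, i :: p => match ts[i]? with
      | some u => subAt u p
      | none => none

/-- Replace the subterm at a position. -/
def replAt : Tm F V → List ℕ → Tm F V → Option (Tm F V)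
  | _, [], s => some s
  | var _, _ :: _, _ => none
  | app f ts, i :: p, s => match ts[i]? with
      | some u => (replAt u p s).map (fun u' => app f (ts.set i u'))
      | none => none

/-- `p` is a position of `t`. -/
def IsPos (t : Tm F V) (p : List ℕ) : Prop := (t.subAt p).isSome

/-- A term is a constant if it is a nullary function application. -/
def IsConst (t : Tm F V) : Prop := ∃ f : F, t = app f []

def Ground (t : Tm F V) : Prop := t.varList = []

/-- A term is linear if each variable occurs at most once. -/
def Linear (t : Tm F V) : Prop := t.varList.Nodup

/-- A term is flat if its height is at most 1. -/
def Flat (t : Tm F V) : Prop := t.height ≤ 1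

/-- A term is shallow if all variables occur at depth at most 1. -/
def Shallow (t : Tm F V) : Prop :=
  ∀ (p : List ℕ) (x : V), t.subAt p = some (var x) → p.length ≤ 1

end Tm

/-- A rewrite rule. -/
structure Rule (F V : Type) where
  lhs : Tm F V
  rhs : Tm F V

namespace Rule

variable {F V : Type}

/-- Standard well-formedness: the lhs is not a variable and variables of the
rhs occur in the lhs. -/
def WF (r : Rule F V) : Prop :=
  (∀ x : V, r.lhs ≠ Tm.var x) ∧ ∀ x ∈ r.rhs.varList, x ∈ r.lhs.varList

def RightFlat (r : Rule F V) : Prop := r.rhs.Flat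
def RightLinear (r : Rule F V) : Prop := r.rhs.Linear
def RightShallow (r : Rule F V) : Prop := r.rhs.Shallow
def FlatRule (r : Rule F V) : Prop := r.lhs.Flat ∧ r.rhs.Flat
def ShallowRule (r : Rule F V) : Prop := r.lhs.Shallow ∧ r.rhs.Shallow
def Collapsing (r : Rule F V) : Prop := ∃ x : V, r.rhs = Tm.var x

/-- A permutative rule: linear, flat, height-preserving and variable-preserving. -/
def Permutative (r : Rule F V) : Prop :=
  r.WF ∧ r.lhs.Linear ∧ r.rhs.Linear ∧ r.lhs.Flat ∧ r.rhs.Flat ∧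
    r.lhs.height = r.rhs.height ∧ ∀ x : V, x ∈ r.lhs.varList ↔ x ∈ r.rhs.varList

end Rule

/-- A permutative theory: a symmetric set of permutative rules. -/
def PermutativeTheory {F V : Type} (E : Set (Rule F V)) : Prop :=
  (∀ r ∈ E, r.Permutative) ∧ ∀ r ∈ E, (⟨r.rhs, r.lhs⟩ : Rule F V) ∈ E

section Rewriting

variable {F V : Type}

/-- One rewrite step with rule `l → r` at position `p` using substitution `σ`. -/
def RewWith (l r : Tm F V) (p : List ℕ) (σ : V → Tm F V) (s t : Tm F V) : Prop :=
  s.subAt p = some (l.subst σ) ∧ s.replAt p (r.subst σ) = some t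

/-- One rewrite step with TRS `R` at position `p`. -/
def RewAt (R : Set (Rule F V)) (p : List ℕ) (s t : Tm F V) : Prop :=
  ∃ r ∈ R, ∃ σ : V → Tm F V, RewWith r.lhs r.rhs p σ s t

/-- One rewrite step with TRS `R`. -/
def Rew (R : Set (Rule F V)) (s t : Tm F V) : Prop := ∃ p, RewAt R p s t

/-- Reachability: reflexive-transitive closure of one-step rewriting. -/
def Reach (R : Set (Rule F V)) : Tm F V → Tm F V → Prop :=
  Relation.ReflTransGen (Rew R)

/-- One rewrite step with `R` modulo `E` : `s →E* · →R · →E* t`. -/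
def RewMod (R E : Set (Rule F V)) (s t : Tm F V) : Prop :=
  ∃ u v, Reach E s u ∧ Rew R u v ∧ Reach E v t

/-- `R/E` is terminating from `s`. -/
def TerminatingFrom (R E : Set (Rule F V)) (s : Tm F V) : Prop :=
  ¬ ∃ f : ℕ → Tm F V, f 0 = s ∧ ∀ n, RewMod R E (f n) (f (n + 1))

/-- `R/E` is terminating. -/
def Terminating (R E : Set (Rule F V)) : Prop :=
  ¬ ∃ f : ℕ → Tm F V, ∀ n, RewMod R E (f n) (f (n + 1))

/-- `t` is reachable from some constant. -/
def FromConst (R : Set (Rule F V)) (t : Tm F V) : Prop :=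
  ∃ f : F, Reach R (Tm.app f []) t

/-- The measure `‖t‖`: number of positions of `t` whose subterm is not reachable
from a constant. -/
noncomputable def meas (R : Set (Rule F V)) (t : Tm F V) : ℕ :=
  Nat.card {p : List ℕ // ∃ u, t.subAt p = some u ∧ ¬ FromConst R u}

/-- `t` is a normal form w.r.t. `R/E`. -/
def NFMod (R E : Set (Rule F V)) (t : Tm F V) : Prop := ¬ ∃ t', RewMod R E t t'

/-- `t` is `R`-irreducible. -/
def NF (R : Set (Rule F V)) (t : Tm F V) : Prop := ¬ ∃ t', Rew R t t'

/-- Innermost rewrite step with `R` (plain rewriting): all proper subterms of the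
redex are irreducible. -/
def IRew (R : Set (Rule F V)) (s t : Tm F V) : Prop :=
  ∃ p, RewAt R p s t ∧
    ∀ (q : List ℕ) (w : Tm F V), q ≠ [] → s.subAt (p ++ q) = some w → NF R w

/-- Innermost rewrite step with `R` modulo `E`. -/
def IRewMod (R E : Set (Rule F V)) (s t : Tm F V) : Prop :=
  ∃ u v, ∃ p : List ℕ, Reach E s u ∧ RewAt R p u v ∧ Reach E v t ∧
    ∀ (q : List ℕ) (w : Tm F V), q ≠ [] → u.subAt (p ++ q) = some w → NFMod R E w

/-- Innermost termination of `R/E`. -/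
def ITerminating (R E : Set (Rule F V)) : Prop :=
  ¬ ∃ f : ℕ → Tm F V, ∀ n, IRewMod R E (f n) (f (n + 1))

end Rewriting

section Marking

variable {F V : Type}

/-- A derivation of length `n` with explicit rules, positions and substitutions. -/
def IsDeriv (R : Set (Rule F V)) (n : ℕ) (s : ℕ → Tm F V) (rl : ℕ → Rule F V)
    (pp : ℕ → List ℕ) (sb : ℕ → V → Tm F V) : Prop :=
  ∀ i < n, rl i ∈ R ∧ RewWith (rl i).lhs (rl i).rhs (pp i) (sb i) (s i) (s (i + 1))

/-- `p'` is strictly below `p̄` : `p̄` is a proper prefix of `p'`. -/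
def StrictBelow (pbar p : List ℕ) : Prop := ∃ q, q ≠ [] ∧ p = pbar ++ q

/-- A marking of a derivation. -/
def IsMarking (n : ℕ) (s : ℕ → Tm F V) (rl : ℕ → Rule F V)
    (pp : ℕ → List ℕ) (M : ℕ → List ℕ → Tm F V) : Prop :=
  (∀ p t, (s 0).subAt p = some t → M 0 p = t) ∧
  ∀ i < n,
    (∀ p, (s (i + 1)).IsPos p → ¬ StrictBelow (pp i) p → M (i + 1) p = M i p) ∧
    (∀ (j : ℕ) (u : Tm F V), (rl i).rhs.subAt [j] = some u → u.IsConst →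
        M (i + 1) (pp i ++ [j]) = u) ∧
    (∀ (j : ℕ) (p₁ : List ℕ) (x : V), (rl i).rhs.subAt [j] = some (Tm.var x) →
        (s (i + 1)).IsPos (pp i ++ j :: p₁) →
        ∃ q₀ : List ℕ, (rl i).lhs.subAt q₀ = some (Tm.var x) ∧
          M (i + 1) (pp i ++ j :: p₁) = M i (pp i ++ q₀ ++ p₁))

end Marking

section WFSig

variable {F V : Type}

/-- Terms respecting the arity function. -/
inductive WFT (ar : F → ℕ) : Tm F V → Prop
  | var (x : V) : WFT ar (Tm.var x)
  | app (f : F) (ts : List (Tm F V)) : ts.length = ar f →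
      (∀ t ∈ ts, WFT ar t) → WFT ar (Tm.app f ts)

end WFSig
section Stmt7Aux
namespace Tm
variable {F V : Type}

theorem my_ind {P : Tm F V → Prop} (hv : ∀ x, P (var x))
    (ha : ∀ f ts, (∀ t ∈ ts, P t) → P (app f ts)) : ∀ t, P t
  | var x => hv x
  | app f ts => ha f ts (fun t ht => my_ind hv ha t)
decreasing_by all_goals (simp_wf; have := List.sizeOf_lt_of_mem ht; omega)

theorem subst_var (σ : V → Tm F V) (x : V) : subst σ (var x) = σ x := by rw [subst]

theorem subst_app (σ : V → Tm F V) (f : F) (ts : List (Tm F V)) :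
    subst σ (app f ts) = app f (ts.map (subst σ)) := by rw [subst]; congr 1; simp

theorem varList_var (x : V) : (var (F := F) x).varList = [x] := by rw [varList]

theorem varList_app (f : F) (ts : List (Tm F V)) :
    (app f ts).varList = (ts.map varList).flatten := by rw [varList]; congr 1; simp

@[simp] theorem subAt_nil (t : Tm F V) : t.subAt [] = some t := by cases t <;> rw [subAt]

@[simp] theorem subAt_var_cons (x : V) (i : ℕ) (p : List ℕ) :
    (var (F := F) x).subAt (i :: p) = none := by rw [subAt]

theorem subAt_cons (f : F) (ts : List (Tm F V)) (i : ℕ) (p : List ℕ) :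
    (app f ts).subAt (i :: p) = (ts[i]?).bind (fun u => u.subAt p) := by
  cases h : ts[i]? <;> simp [subAt, h]

theorem subAt_append (t : Tm F V) (p q : List ℕ) :
    t.subAt (p ++ q) = (t.subAt p).bind (fun u => u.subAt q) := by
  induction p generalizing t with
  | nil => simp
  | cons i p ih =>
    cases t with
    | var x => simp
    | app f ts =>
      rw [List.cons_append, subAt_cons, subAt_cons]
      cases h : ts[i]? with
      | none => simp
      | some u => simp [ih]

theorem subAt_subst {σ : V → Tm F V} {u w : Tm F V} {q : List ℕ}
    (h : u.subAt q = some w) : (u.subst σ).subAt q = some (w.subst σ) := by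
  induction q generalizing u with
  | nil => simp at h; subst h; simp
  | cons i q ih =>
    cases u with
    | var x => simp at h
    | app f ts =>
      rw [subAt_cons] at h
      rw [subst_app, subAt_cons]
      cases hg : ts[i]? with
      | none => rw [hg] at h; simp at h
      | some a =>
        rw [hg] at h
        simp only [Option.bind_some] at h
        have hm : (ts.map (subst σ))[i]? = some (a.subst σ) := by
          rw [List.getElem?_map, hg]; rfl
        rw [hm, Option.bind_some]
        exact ih h


@[simp] theorem replAt_nil (t v : Tm F V) : t.replAt [] v = some v := by cases t <;> rw [replAt]

@[simp] theorem replAt_var_cons (x : V) (i : ℕ) (p : List ℕ) (v : Tm F V) :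
    (var (F := F) x).replAt (i :: p) v = none := by rw [replAt]

theorem replAt_cons (f : F) (ts : List (Tm F V)) (i : ℕ) (p : List ℕ) (v : Tm F V) :
    (app f ts).replAt (i :: p) v =
      (ts[i]?).bind (fun u => (u.replAt p v).map (fun u' => app f (ts.set i u'))) := by
  cases h : ts[i]? <;> simp [replAt, h]

theorem get?_set_self {ts : List (Tm F V)} {i : ℕ} {u u' : Tm F V} (h : ts[i]? = some u) :
    (ts.set i u')[i]? = some u' := by
  have hi : i < ts.length := by
    by_contra hc
    rw [List.getElem?_eq_none (by omega)] at h; exact absurd h (by simp)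
  rw [List.getElem?_set_self (by simpa using hi)]

theorem get?_set_ne {ts : List (Tm F V)} {i j : ℕ} {u' : Tm F V} (h : j ≠ i) :
    (ts.set i u')[j]? = ts[j]? := by
  rw [List.getElem?_set_ne (Ne.symm h)]

theorem subAt_replAt_below {s t v : Tm F V} {p : List ℕ}
    (h : s.replAt p v = some t) (d : List ℕ) : t.subAt (p ++ d) = v.subAt d := by
  induction p generalizing s t with
  | nil => simp at h; subst h; simp
  | cons i p ih =>
    cases s with
    | var x => simp at h
    | app f ts =>
      rw [replAt_cons] at h
      cases hg : ts[i]? with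
      | none => rw [hg] at h; simp at h
      | some u =>
        rw [hg] at h
        simp only [Option.bind_some, Option.map_eq_some_iff] at h
        obtain ⟨u', hu', ht⟩ := h
        subst ht
        rw [List.cons_append, subAt_cons, get?_set_self hg, Option.bind_some]
        exact ih hu'

theorem subAt_replAt_off {s t v : Tm F V} {p q : List ℕ}
    (h : s.replAt p v = some t) (h1 : ¬ p <+: q) (h2 : ¬ q <+: p) :
    t.subAt q = s.subAt q := by
  induction p generalizing s t q with
  | nil => exact absurd List.nil_prefix h1
  | cons i p ih =>
    cases q with
    | nil => exact absurd List.nil_prefix h2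
    | cons j q' =>
      cases s with
      | var x => simp at h
      | app f ts =>
        rw [replAt_cons] at h
        cases hg : ts[i]? with
        | none => rw [hg] at h; simp at h
        | some u =>
          rw [hg] at h
          simp only [Option.bind_some, Option.map_eq_some_iff] at h
          obtain ⟨u', hu', ht⟩ := h
          subst ht
          rw [subAt_cons, subAt_cons]
          by_cases hij : j = i
          · subst hij
            rw [get?_set_self hg, hg, Option.bind_some, Option.bind_some]
            refine ih hu' (fun hp => h1 ?_) (fun hp => h2 ?_)
            · exact List.cons_prefix_cons.mpr ⟨rfl, hp⟩
            · exact List.cons_prefix_cons.mpr ⟨rfl, hp⟩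
          · rw [get?_set_ne hij]

theorem replAt_prefix {s t v : Tm F V} {q d : List ℕ}
    (h : s.replAt (q ++ d) v = some t) :
    ∃ w w', s.subAt q = some w ∧ t.subAt q = some w' ∧ w.replAt d v = some w' := by
  induction q generalizing s t with
  | nil => exact ⟨s, t, subAt_nil s, subAt_nil t, h⟩
  | cons j q' ih =>
    cases s with
    | var x => simp at h
    | app f ts =>
      rw [List.cons_append, replAt_cons] at h
      cases hg : ts[j]? with
      | none => rw [hg] at h; simp at h
      | some u =>
        rw [hg] at h
        simp only [Option.bind_some, Option.map_eq_some_iff] at h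
        obtain ⟨u', hu', ht⟩ := h
        subst ht
        obtain ⟨w, w', h1, h2, h3⟩ := ih hu'
        refine ⟨w, w', ?_, ?_, h3⟩
        · rw [subAt_cons, hg, Option.bind_some]; exact h1
        · rw [subAt_cons, get?_set_self hg, Option.bind_some]; exact h2

theorem attach_foldr {α β : Type*} (l : List α) (g : α → β → β) (b : β) :
    l.attach.foldr (fun t m => g t.1 m) b = l.foldr g b := by
  have h : l = l.attach.map (fun x => x.1) := by simp
  conv_rhs => rw [h]
  rw [List.foldr_map]

theorem height_app (f : F) (ts : List (Tm F V)) :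
    height (app f ts) = ts.foldr (fun t m => max (height t + 1) m) 0 := by
  rw [height]; exact attach_foldr ts (fun t m => max (t.height + 1) m) 0

theorem height_flat_args {f : F} {ts : List (Tm F V)} (h : height (app f ts) ≤ 1) :
    ∀ a ∈ ts, height a = 0 := by
  rw [height_app] at h
  induction ts with
  | nil => simp
  | cons b l ih =>
    rw [List.foldr_cons] at h
    intro a ha
    rcases List.mem_cons.mp ha with rfl | ha'
    · have := le_trans (le_max_left _ _) h; omega
    · exact ih (le_trans (le_max_right _ _) h) a ha'

theorem height_eq_zero {a : Tm F V} (h : height a = 0) :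
    (∃ x, a = var x) ∨ ∃ g, a = app g [] := by
  cases a with
  | var x => exact Or.inl ⟨x, rfl⟩
  | app g ts =>
    cases ts with
    | nil => exact Or.inr ⟨g, rfl⟩
    | cons b l => rw [height_app, List.foldr_cons] at h; omega

theorem exists_pos_of_mem_varList :
    ∀ (t : Tm F V) (x : V), x ∈ t.varList → ∃ q, t.subAt q = some (var x) := by
  intro t
  induction t using my_ind with
  | hv y =>
    intro x hx
    rw [varList_var, List.mem_singleton] at hx
    subst hx
    exact ⟨[], rfl⟩
  | ha f ts ih =>
    intro x hx
    rw [varList_app] at hx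
    rw [List.mem_flatten] at hx
    obtain ⟨L, hL, hxL⟩ := hx
    obtain ⟨a, ha', rfl⟩ := List.mem_map.mp hL
    obtain ⟨q, hq⟩ := ih a ha' x hxL
    obtain ⟨i, hi⟩ := List.getElem?_of_mem ha'
    exact ⟨i :: q, by rw [subAt_cons, hi, Option.bind_some]; exact hq⟩

theorem subAt_var_append_eq {l : Tm F V} {q1 q2 : List ℕ} {x y : V} {a b : List ℕ}
    (h1 : l.subAt q1 = some (var x)) (h2 : l.subAt q2 = some (var y))
    (hab : q1 ++ a = q2 ++ b) : q1 = q2 ∧ a = b := by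
  have key : ∀ (qa qb : List ℕ) (xa xb : V), l.subAt qa = some (var xa) →
      l.subAt qb = some (var xb) → qa <+: qb → qa = qb := by
    intro qa qb xa xb ha hb ⟨e, he⟩
    cases e with
    | nil => rw [← he, List.append_nil]
    | cons i e' =>
      rw [← he, subAt_append, ha, Option.bind_some, subAt_var_cons] at hb
      exact absurd hb (by simp)
  have heq : q1 = q2 := by
    rcases List.prefix_or_prefix_of_prefix ⟨a, rfl⟩ ⟨b, hab.symm⟩ with hp | hp
    · exact key q1 q2 x y h1 h2 hp
    · exact (key q2 q1 y x h2 h1 hp).symm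
  subst heq
  exact ⟨rfl, List.append_cancel_left hab⟩

theorem var_index_unique {f : F} {args : List (Tm F V)}
    (hnd : (app f args).varList.Nodup) {j k : ℕ} {x : V}
    (hj : args[j]? = some (var x)) (hk : args[k]? = some (var x)) : j = k := by
  by_contra hne
  rw [varList_app, List.nodup_flatten] at hnd
  have hpw := hnd.2
  rw [List.pairwise_iff_getElem] at hpw
  obtain ⟨hjl, hjv⟩ := List.getElem?_eq_some_iff.mp hj
  obtain ⟨hkl, hkv⟩ := List.getElem?_eq_some_iff.mp hk
  have hmaplen : (args.map varList).length = args.length := List.length_map _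
  have hgj : (args.map varList)[j]'(by omega) = [x] := by
    rw [List.getElem_map]
    have : args[j]'hjl = var x := by simpa [List.getElem?_eq_getElem hjl] using hj
    rw [this, varList_var]
  have hgk : (args.map varList)[k]'(by omega) = [x] := by
    rw [List.getElem_map]
    have : args[k]'hkl = var x := by simpa [List.getElem?_eq_getElem hkl] using hk
    rw [this, varList_var]
  rcases Nat.lt_or_ge j k with hlt | hge
  · have := hpw j k (by omega) (by omega) hlt
    rw [hgj, hgk] at this
    exact this (List.mem_singleton_self x) (List.mem_singleton_self x)
  · have hlt' : k < j := by omega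
    have := hpw k j (by omega) (by omega) hlt'
    rw [hgj, hgk] at this
    exact this (List.mem_singleton_self x) (List.mem_singleton_self x)

theorem finite_pos : ∀ t : Tm F V, {p : List ℕ | (t.subAt p).isSome}.Finite := by
  intro t
  induction t using my_ind with
  | hv x =>
    refine Set.Finite.subset (Set.finite_singleton ([] : List ℕ)) ?_
    intro p hp
    cases p with
    | nil => rfl
    | cons i q => simp [Set.mem_setOf_eq] at hp
  | ha f ts ih =>
    refine Set.Finite.subset (Set.Finite.insert []
      (Set.finite_iUnion (fun i : Fin ts.length =>
        ((ih _ (ts.get_mem i)).image (fun q => (i : ℕ) :: q))))) ?_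
    intro p hp
    cases p with
    | nil => exact Set.mem_insert _ _
    | cons i q =>
      simp only [Set.mem_setOf_eq, subAt_cons] at hp
      cases hg : ts[i]? with
      | none => rw [hg] at hp; simp at hp
      | some u =>
        rw [hg, Option.bind_some] at hp
        obtain ⟨hi, hgu⟩ := List.getElem?_eq_some_iff.mp hg
        refine Set.mem_insert_iff.mpr (Or.inr ?_)
        refine Set.mem_iUnion.mpr ⟨⟨i, hi⟩, ⟨q, ?_, rfl⟩⟩
        have hgu' : ts[i]'hi = u := hgu
        simpa [Set.mem_setOf_eq, List.get_eq_getElem, hgu'] using hp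

end Tm

theorem fromConst_step {F V : Type} {R : Set (Rule F V)} {u u' : Tm F V}
    (h : Rew R u u') (hc : FromConst R u) : FromConst R u' := by
  obtain ⟨f, hf⟩ := hc
  exact ⟨f, hf.tail h⟩

theorem meas_le_of_map {F V : Type} {R : Set (Rule F V)} {s t : Tm F V} (g : List ℕ → List ℕ)
    (hmap : ∀ q u, t.subAt q = some u → ¬ FromConst R u →
      ∃ u', s.subAt (g q) = some u' ∧ ¬ FromConst R u')
    (hinj : ∀ q1 q2, (∃ u, t.subAt q1 = some u ∧ ¬ FromConst R u) →
      (∃ u, t.subAt q2 = some u ∧ ¬ FromConst R u) → g q1 = g q2 → q1 = q2) :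
    meas R t ≤ meas R s := by
  have hfin : Finite {p : List ℕ // ∃ u, s.subAt p = some u ∧ ¬ FromConst R u} := by
    have hsub : {p : List ℕ | ∃ u, s.subAt p = some u ∧ ¬ FromConst R u} ⊆
        {p : List ℕ | (s.subAt p).isSome} := by
      rintro p ⟨u, hu, -⟩
      simp [Set.mem_setOf_eq, hu]
    exact ((Tm.finite_pos s).subset hsub).to_subtype
  refine Nat.card_le_card_of_injective
    (fun q => ⟨g q.1, by
      obtain ⟨u, h1, h2⟩ := q.2
      obtain ⟨u', h1', h2'⟩ := hmap q.1 u h1 h2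
      exact ⟨u', h1', h2'⟩⟩) ?_
  intro a b hab
  exact Subtype.ext (hinj a.1 b.1 a.2 b.2 (congrArg Subtype.val hab))

/-- For a right-flat right-linear TRS, a rewrite step cannot increase the
measure `‖·‖` counting positions whose subterms are not reachable from a constant. -/
theorem stmt7 {F V : Type} (R : Set (Rule F V))
    (hR : ∀ r ∈ R, r.RightFlat ∧ r.RightLinear) (hRwf : ∀ r ∈ R, r.WF)
    (s t : Tm F V) (h : Rew R s t) :
    meas R t ≤ meas R s := by
  classical
  obtain ⟨p, rl, hrlR, σ, hsub, hrep⟩ := h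
  obtain ⟨hflat, hlin⟩ := hR rl hrlR
  obtain ⟨hwf1, hwf2⟩ := hRwf rl hrlR
  have hpt : ∀ d, t.subAt (p ++ d) = (rl.rhs.subst σ).subAt d := Tm.subAt_replAt_below hrep
  have hroot : Rew R (rl.lhs.subst σ) (rl.rhs.subst σ) :=
    ⟨[], rl, hrlR, σ, Tm.subAt_nil _, Tm.replAt_nil _ _⟩
  -- positions not strictly below `p` keep a bad subterm
  have hkeep : ∀ q u, ¬ StrictBelow p q → t.subAt q = some u → ¬ FromConst R u →
      ∃ u', s.subAt q = some u' ∧ ¬ FromConst R u' := by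
    intro q u hnsb hqu hnc
    by_cases hpq : p <+: q
    · obtain ⟨d, rfl⟩ := hpq
      have hd : d = [] := by
        by_contra hd
        exact hnsb ⟨d, hd, rfl⟩
      subst hd
      have hu : u = rl.rhs.subst σ := by
        have h0 := hpt []
        rw [List.append_nil] at h0
        rw [List.append_nil] at hqu
        rw [hqu, Tm.subAt_nil] at h0
        exact Option.some.inj h0
      rw [List.append_nil]
      exact ⟨rl.lhs.subst σ, hsub, fun hc => hnc (by rw [hu]; exact fromConst_step hroot hc)⟩
    · by_cases hqp : q <+: p
      · obtain ⟨d, hd⟩ := hqp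
        have hdne : d ≠ [] := by
          rintro rfl
          rw [List.append_nil] at hd
          exact hpq (hd ▸ List.prefix_refl q)
        rw [← hd] at hrep
        obtain ⟨w, w', h1, h2, h3⟩ := Tm.replAt_prefix hrep
        have hw : w.subAt d = some (rl.lhs.subst σ) := by
          have h4 := Tm.subAt_append s q d
          rw [hd, hsub, h1, Option.bind_some] at h4
          exact h4.symm
        have hstep : Rew R w w' := ⟨d, rl, hrlR, σ, hw, h3⟩
        have hu : w' = u := Option.some.inj (h2.symm.trans hqu)
        exact ⟨w, h1, fun hc => hnc (by rw [← hu]; exact fromConst_step hstep hc)⟩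
      · have h4 := Tm.subAt_replAt_off hrep hpq hqp
        exact ⟨u, by rw [← h4]; exact hqu, hnc⟩
  -- chosen variable positions in the lhs
  set vp : V → List ℕ := fun x =>
    if h : ∃ q, rl.lhs.subAt q = some (Tm.var x) then h.choose else [] with hvpdef
  have hvp : ∀ x ∈ rl.lhs.varList, rl.lhs.subAt (vp x) = some (Tm.var x) := by
    intro x hx
    have hex := Tm.exists_pos_of_mem_varList rl.lhs x hx
    simp only [hvpdef, dif_pos hex]
    exact hex.choose_spec
  have hvpne : ∀ x, rl.lhs.subAt (vp x) = some (Tm.var x) → vp x ≠ [] := by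
    intro x hx hnil
    rw [hnil] at hx
    simp only [Tm.subAt_nil, Option.some.injEq] at hx
    exact hwf1 x hx
  have hbval : ∀ (x : V) (q₀ qq : List ℕ), rl.lhs.subAt q₀ = some (Tm.var x) →
      s.subAt (p ++ q₀ ++ qq) = (σ x).subAt qq := by
    intro x q₀ qq hq₀
    rw [List.append_assoc, Tm.subAt_append, hsub, Option.bind_some, Tm.subAt_append,
      Tm.subAt_subst hq₀, Option.bind_some, Tm.subst_var]
  cases hrs : rl.rhs with
  | var x =>
    have hxl : x ∈ rl.lhs.varList :=
      hwf2 x (by rw [hrs, Tm.varList_var]; exact List.mem_singleton_self x)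
    have hq0 := hvp x hxl
    have hq0ne := hvpne x hq0
    refine meas_le_of_map
      (fun q => if StrictBelow p q then p ++ vp x ++ q.drop p.length else q) ?_ ?_
    · intro q u hqu hnc
      beta_reduce
      by_cases hsb : StrictBelow p q
      · rw [if_pos hsb]
        obtain ⟨qq, hqqne, rfl⟩ := hsb
        rw [List.drop_left]
        refine ⟨u, ?_, hnc⟩
        rw [hbval x (vp x) qq hq0]
        rw [hpt qq, hrs, Tm.subst_var] at hqu
        exact hqu
      · rw [if_neg hsb]
        exact hkeep q u hsb hqu hnc
    · intro q1 q2 h1 h2 heq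
      beta_reduce at heq
      by_cases hsb1 : StrictBelow p q1 <;> by_cases hsb2 : StrictBelow p q2
      · rw [if_pos hsb1, if_pos hsb2] at heq
        obtain ⟨qq1, -, rfl⟩ := hsb1
        obtain ⟨qq2, -, rfl⟩ := hsb2
        rw [List.drop_left, List.drop_left] at heq
        rw [List.append_cancel_left heq]
      · rw [if_pos hsb1, if_neg hsb2] at heq
        obtain ⟨qq1, -, rfl⟩ := hsb1
        rw [List.drop_left] at heq
        exact absurd (show StrictBelow p q2 from
          ⟨vp x ++ qq1, fun hc => hq0ne (List.append_eq_nil_iff.mp hc).1,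
            by rw [← heq, List.append_assoc]⟩) hsb2
      · rw [if_neg hsb1, if_pos hsb2] at heq
        obtain ⟨qq2, -, rfl⟩ := hsb2
        rw [List.drop_left] at heq
        exact absurd (show StrictBelow p q1 from
          ⟨vp x ++ qq2, fun hc => hq0ne (List.append_eq_nil_iff.mp hc).1,
            by rw [heq, List.append_assoc]⟩) hsb1
      · rw [if_neg hsb1, if_neg hsb2] at heq
        exact heq
  | app f args =>
    have hargs : ∀ a ∈ args, (∃ x, a = Tm.var x) ∨ ∃ g, a = Tm.app g [] := by
      intro a ha
      have hflat' : Tm.height (Tm.app f args) ≤ 1 := by rw [← hrs]; exact hflat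
      exact Tm.height_eq_zero (Tm.height_flat_args hflat' a ha)
    set xv : ℕ → Option V := fun j =>
      if h : ∃ x, args[j]? = some (Tm.var x) then some h.choose else none with hxvdef
    have hxv : ∀ j x, args[j]? = some (Tm.var x) → xv j = some x := by
      intro j x hga
      have hex : ∃ y, args[j]? = some (Tm.var y) := ⟨x, hga⟩
      simp only [hxvdef, dif_pos hex]
      have h2 := hex.choose_spec
      have h3 : Tm.var (F := F) hex.choose = Tm.var x := Option.some.inj (h2.symm.trans hga)
      rw [Tm.var.injEq] at h3
      rw [h3]
    set g : List ℕ → List ℕ := fun q => if StrictBelow p q then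
        (xv ((q.drop p.length).headI)).elim q
          (fun x => p ++ vp x ++ (q.drop p.length).tail)
      else q with hgdef
    have hgneg : ∀ q, ¬ StrictBelow p q → g q = q := by
      intro q hq
      simp only [hgdef]
      rw [if_neg hq]
    have hgeval : ∀ (j : ℕ) (qq : List ℕ) (x : V), args[j]? = some (Tm.var x) →
        g (p ++ j :: qq) = p ++ vp x ++ qq := by
      intro j qq x hga
      have hsb : StrictBelow p (p ++ j :: qq) := ⟨j :: qq, by simp, rfl⟩
      simp only [hgdef]
      rw [if_pos hsb, List.drop_left]
      simp only [List.headI, List.tail_cons]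
      rw [hxv j x hga]
      rfl
    -- structure of bad positions strictly below p
    have hBB : ∀ q u, t.subAt q = some u → ¬ FromConst R u → StrictBelow p q →
        ∃ (j : ℕ) (qq : List ℕ) (x : V), q = p ++ j :: qq ∧
          args[j]? = some (Tm.var x) ∧ x ∈ rl.lhs.varList ∧ (σ x).subAt qq = some u := by
      intro q u hqu hnc hsb
      obtain ⟨qq0, hne, rfl⟩ := hsb
      cases qq0 with
      | nil => exact absurd rfl hne
      | cons j qq =>
        rw [hpt (j :: qq), hrs, Tm.subst_app, Tm.subAt_cons] at hqu
        cases hg : (args.map (Tm.subst σ))[j]? with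
        | none => rw [hg] at hqu; simp at hqu
        | some aσ =>
          rw [hg, Option.bind_some] at hqu
          rw [List.getElem?_map] at hg
          cases hga : args[j]? with
          | none => rw [hga] at hg; simp at hg
          | some a =>
            rw [hga] at hg
            simp only [Option.map_some, Option.some.injEq] at hg
            rcases hargs a (List.mem_of_getElem? hga) with ⟨x, rfl⟩ | ⟨c, rfl⟩
            · refine ⟨j, qq, x, rfl, hga, ?_, ?_⟩
              · refine hwf2 x ?_
                rw [hrs, Tm.varList_app]
                exact List.mem_flatten.mpr ⟨[x],
                  List.mem_map.mpr ⟨Tm.var x, List.mem_of_getElem? hga, Tm.varList_var x⟩,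
                  List.mem_singleton_self x⟩
              · rw [← hg, Tm.subst_var] at hqu
                exact hqu
            · exfalso
              rw [← hg, Tm.subst_app] at hqu
              simp only [List.map_nil] at hqu
              cases qq with
              | nil =>
                rw [Tm.subAt_nil] at hqu
                exact hnc ⟨c, by rw [← Option.some.inj hqu]; exact Relation.ReflTransGen.refl⟩
              | cons k qq' =>
                rw [Tm.subAt_cons] at hqu
                simp at hqu
    refine meas_le_of_map g ?_ ?_
    · intro q u hqu hnc
      by_cases hsb : StrictBelow p q
      · obtain ⟨j, qq, x, rfl, hga, hxl, hσ⟩ := hBB _ u hqu hnc hsb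
        rw [hgeval j qq x hga]
        exact ⟨u, by rw [hbval x (vp x) qq (hvp x hxl)]; exact hσ, hnc⟩
      · rw [hgneg q hsb]
        exact hkeep q u hsb hqu hnc
    · intro q1 q2 hb1 hb2 heq
      obtain ⟨u1, hq1, hn1⟩ := hb1
      obtain ⟨u2, hq2, hn2⟩ := hb2
      by_cases hsb1 : StrictBelow p q1 <;> by_cases hsb2 : StrictBelow p q2
      · obtain ⟨j1, qq1, x1, rfl, hga1, hxl1, -⟩ := hBB _ _ hq1 hn1 hsb1
        obtain ⟨j2, qq2, x2, rfl, hga2, hxl2, -⟩ := hBB _ _ hq2 hn2 hsb2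
        rw [hgeval j1 qq1 x1 hga1, hgeval j2 qq2 x2 hga2] at heq
        rw [List.append_assoc, List.append_assoc] at heq
        have heq' := List.append_cancel_left heq
        obtain ⟨hvpeq, hqqeq⟩ :=
          Tm.subAt_var_append_eq (hvp x1 hxl1) (hvp x2 hxl2) heq'
        have hx12 : x1 = x2 := by
          have ha1 := hvp x1 hxl1
          have ha2 := hvp x2 hxl2
          rw [hvpeq] at ha1
          rw [ha2] at ha1
          simpa using ha1.symm
        subst hx12
        have hj : j1 = j2 := by
          have hlin' : (Tm.app f args).varList.Nodup := by rw [← hrs]; exact hlin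
          exact Tm.var_index_unique hlin' hga1 hga2
        rw [hj, hqqeq]
      · obtain ⟨j1, qq1, x1, rfl, hga1, hxl1, -⟩ := hBB _ _ hq1 hn1 hsb1
        rw [hgeval j1 qq1 x1 hga1, hgneg q2 hsb2] at heq
        exact absurd (show StrictBelow p q2 from
          ⟨vp x1 ++ qq1, fun hc => hvpne x1 (hvp x1 hxl1) (List.append_eq_nil_iff.mp hc).1,
            by rw [← heq, List.append_assoc]⟩) hsb2
      · obtain ⟨j2, qq2, x2, rfl, hga2, hxl2, -⟩ := hBB _ _ hq2 hn2 hsb2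
        rw [hgeval j2 qq2 x2 hga2, hgneg q1 hsb1] at heq
        exact absurd (show StrictBelow p q1 from
          ⟨vp x2 ++ qq2, fun hc => hvpne x2 (hvp x2 hxl2) (List.append_eq_nil_iff.mp hc).1,
            by rw [heq, List.append_assoc]⟩) hsb1
      · rw [hgneg q1 hsb1, hgneg q2 hsb2] at heq
        exact heq
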